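/- For every cycle C_n of length n ≥ 3, the 2-multigraph ²C_n obtained from C_n by doubling every edge admits a decomposition into at most 2 locally irregular submultigraphs, i.e. lir(²C_n) ≤ 2. -/

import Mathlib

/-- The degree of a vertex `v` in the multigraph given by the symmetric
edge-multiplicity function `μ` : the sum of the multiplicities of the edges at `v`. -/
def mdeg {V : Type*} [Fintype V] (μ : V → V → ℕ) (v : V) : ℕ := ∑ u, μ v u

/-- A multigraph (given by a symmetric edge-multiplicity function `μ`) is locally
irregular if any two vertices adjacent in it (joined by an edge of positive
multiplicity) have distinct degrees. -/
def MulLocIrreg {V : Type*} [Fintype V] (μ : V → V → ℕ) : Prop :=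
  ∀ v w, 0 < μ v w → mdeg μ v ≠ mdeg μ w

/-- `μs` is a decomposition of the 2-multigraph `²G` (obtained from `G` by doubling
every edge) into `k` locally irregular submultigraphs: each `μs i` is a symmetric
multiplicity function supported on the edges of `G`, the multiplicities sum to `2`
on every edge of `G`, and each `μs i` is locally irregular. -/
def IsLirDecomp {V : Type*} [Fintype V] (G : SimpleGraph V) (k : ℕ)
    (μs : Fin k → V → V → ℕ) : Prop :=
  (∀ i v w, μs i v w = μs i w v) ∧
  (∀ i v w, 0 < μs i v w → G.Adj v w) ∧
  (∀ v w, G.Adj v w → ∑ i, μs i v w = 2) ∧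
  (∀ i, MulLocIrreg (μs i))

/-- Auxiliary multiplicity pattern for edge `{i, i+1}` of the cycle `Cₙ`. -/
def F (n i : ℕ) : ℕ :=
  if n % 2 = 1 then
    (if (if i % 2 = 0 then i / 2 else (n + i) / 2) = n - 1 then 2
     else (if i % 2 = 0 then i / 2 else (n + i) / 2) % 2)
  else
    if (n / 2) % 2 = 1 ∧ i / 2 = n / 2 - 1 then 2 else (i / 2) % 2

lemma F_le (n i : ℕ) : F n i ≤ 2 := by unfold F; split_ifs <;> omega

lemma F_key (n : ℕ) (hn : 3 ≤ n) (i : ℕ) (hi : i < n) : F n i ≠ F n ((i + 2) % n) := by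
  have h2 : (i + 2) % n = if i + 2 < n then i + 2 else i + 2 - n := by
    split_ifs with h
    · exact Nat.mod_eq_of_lt h
    · rw [Nat.mod_eq_sub_mod (by omega), Nat.mod_eq_of_lt (by omega)]
  unfold F
  rw [h2]
  split_ifs <;> omega

section Aux
variable {n : ℕ} [NeZero n]
open Fin.CommRing

/-- The multigraph on the cycle whose edge `{v, v+1}` has multiplicity `h v`. -/
def Mu (h : Fin n → ℕ) (v w : Fin n) : ℕ :=
  if w = v + 1 then h v else if v = w + 1 then h w else 0

lemma one_val (hn : 3 ≤ n) : ((1 : Fin n) : ℕ) = 1 := by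
  rw [Fin.val_one', Nat.mod_eq_of_lt (by omega)]

lemma two_val (hn : 3 ≤ n) : ((2 : Fin n) : ℕ) = 2 := by
  have h : (2 : Fin n) = 1 + 1 := by norm_num
  rw [h, Fin.val_add, one_val hn, Nat.mod_eq_of_lt (by omega)]

lemma two_ne (hn : 3 ≤ n) : (2 : Fin n) ≠ 0 := by
  intro h
  have := congrArg Fin.val h
  rw [two_val hn] at this
  simp at this

lemma excl (hn : 3 ≤ n) {v w : Fin n} (h1 : w = v + 1) : v ≠ w + 1 := by
  intro h2
  apply two_ne hn
  have h3 : v + 2 = v + 0 := by rw [add_zero]; nth_rewrite 2 [h2]; rw [h1]; ring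
  exact add_left_cancel h3

lemma add_ne_sub (hn : 3 ≤ n) (v : Fin n) : v + 1 ≠ v - 1 := by
  intro hc
  apply two_ne hn
  have h : v + 1 - (v - 1) = 2 := by ring
  rw [hc, sub_self] at h
  exact h.symm

lemma Mu_symm (hn : 3 ≤ n) (h : Fin n → ℕ) (v w : Fin n) : Mu h v w = Mu h w v := by
  unfold Mu
  by_cases h1 : w = v + 1 <;> by_cases h2 : v = w + 1
  · exact absurd h2 (excl hn h1)
  · rw [if_pos h1, if_neg h2, if_pos h1]
  · rw [if_neg h1, if_pos h2, if_pos h2]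
  · rw [if_neg h1, if_neg h2, if_neg h2, if_neg h1]

lemma Mu_adj (hn : 3 ≤ n) (h : Fin n → ℕ) (v w : Fin n) (hpos : 0 < Mu h v w) :
    (SimpleGraph.cycleGraph n).Adj v w := by
  rw [SimpleGraph.cycleGraph_adj']
  unfold Mu at hpos
  split_ifs at hpos with h1 h2
  · right
    rw [h1, add_sub_cancel_left, one_val hn]
  · left
    rw [h2, add_sub_cancel_left, one_val hn]
  · exact absurd hpos (by omega)

lemma adj_cases (hn : 3 ≤ n) {v w : Fin n} (h : (SimpleGraph.cycleGraph n).Adj v w) :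
    w = v + 1 ∨ v = w + 1 := by
  rw [SimpleGraph.cycleGraph_adj'] at h
  rcases h with h | h
  · right
    have hvw : v - w = 1 := by rw [Fin.ext_iff, h, one_val hn]
    rw [← hvw]; ring
  · left
    have hvw : w - v = 1 := by rw [Fin.ext_iff, h, one_val hn]
    rw [← hvw]; ring

lemma mdeg_Mu (hn : 3 ≤ n) (h : Fin n → ℕ) (v : Fin n) :
    mdeg (Mu h) v = h (v - 1) + h v := by
  unfold mdeg
  have e : ∀ u, Mu h v u =
      (if v + 1 = u then h v else 0) + (if v - 1 = u then h (v - 1) else 0) := by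
    intro u
    unfold Mu
    by_cases h1 : u = v + 1
    · subst h1
      rw [if_pos rfl, if_pos rfl, if_neg (fun hc => add_ne_sub hn v hc.symm), add_zero]
    · by_cases h3 : u = v - 1
      · subst h3
        rw [if_neg h1, if_pos (by rw [sub_add_cancel]), if_neg (add_ne_sub hn v),
          if_pos rfl, zero_add]
      · rw [if_neg h1, if_neg (fun hc : v = u + 1 => h3 (by rw [hc]; ring)),
          if_neg (fun hc => h1 hc.symm), if_neg (fun hc => h3 hc.symm), add_zero]
  rw [Finset.sum_congr rfl (fun u _ => e u), Finset.sum_add_distrib,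
    Finset.sum_ite_eq, Finset.sum_ite_eq]
  simp [add_comm]

lemma Mu_irreg (hn : 3 ≤ n) (h : Fin n → ℕ) (hk : ∀ v : Fin n, h (v - 1) ≠ h (v + 1)) :
    MulLocIrreg (Mu h) := by
  intro v w hpos
  rw [mdeg_Mu hn, mdeg_Mu hn]
  unfold Mu at hpos
  split_ifs at hpos with h1 h2
  · subst h1
    rw [add_sub_cancel_right]
    intro heq
    exact hk v (by omega)
  · subst h2
    rw [add_sub_cancel_right]
    intro heq
    exact hk w (by omega)
  · exact absurd hpos (by omega)

end Aux

/-- For every cycle `C n` of length `n ≥ 3`, the 2-multigraph `²Cₙ` obtained by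
doubling every edge decomposes into at most 2 locally irregular submultigraphs. -/
theorem lir_doubled_cycle_le_two (n : ℕ) (hn : 3 ≤ n) :
    ∃ μs : Fin 2 → Fin n → Fin n → ℕ, IsLirDecomp (SimpleGraph.cycleGraph n) 2 μs := by
  haveI : NeZero n := ⟨by omega⟩
  set f : Fin n → ℕ := fun v => F n v.val with hf
  set g : Fin n → ℕ := fun v => 2 - F n v.val with hg
  have hfle : ∀ v, f v ≤ 2 := fun v => F_le n v.val
  have key : ∀ v : Fin n, f v ≠ f (v + 2) := by
    intro v
    have hv : ((v + 2 : Fin n) : ℕ) = (v.val + 2) % n := by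
      rw [Fin.val_add, two_val hn]
    simpa [hf, hv] using F_key n hn v.val v.isLt
  have key' : ∀ v : Fin n, f (v - 1) ≠ f (v + 1) := by
    intro v
    have h := key (v - 1)
    rwa [show v - 1 + 2 = v + 1 by open Fin.CommRing in ring] at h
  have keyg : ∀ v : Fin n, g (v - 1) ≠ g (v + 1) := by
    intro v
    have h := key' v
    have h1 := hfle (v - 1)
    have h2 := hfle (v + 1)
    simp only [hf, hg] at *
    omega
  refine ⟨![Mu f, Mu g], ?_, ?_, ?_, ?_⟩
  · intro i v w
    fin_cases i
    · exact Mu_symm hn f v w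
    · exact Mu_symm hn g v w
  · intro i v w hpos
    fin_cases i
    · exact Mu_adj hn f v w hpos
    · exact Mu_adj hn g v w hpos
  · intro v w hadj
    rw [Fin.sum_univ_two]
    have hs : Mu f v w + Mu g v w = 2 := by
      rcases adj_cases hn hadj with h1 | h1
      · unfold Mu
        rw [if_pos h1, if_pos h1]
        have := hfle v
        simp only [hf, hg] at *
        omega
      · unfold Mu
        rw [if_neg (excl hn h1), if_pos h1, if_neg (excl hn h1), if_pos h1]
        have := hfle w
        simp only [hf, hg] at *
        omega
    simpa using hs
  · intro i
    fin_cases i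
    · exact Mu_irreg hn f key'
    · exact Mu_irreg hn g keyg
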